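/- Let q ∈ ℂ^n and G ∈ ℂ^{n×n} be Hermitian. If the block matrix [[G, q],[q*, 1]] is positive semidefinite and tr(Θ_k G) = δ_{k,0} for all 0 ≤ k ≤ n−1, then |Σ_{l=0}^{n−1} q_l e^{−i2πfl}| ≤ 1 for every f ∈ [0,1]. -/

import Mathlib

open Matrix ComplexOrder Real

/-- The `m × m` elementary Toeplitz matrix with ones on the `k`-th diagonal. -/
def elemToeplitz (m : ℕ) (k : ℤ) : Matrix (Fin m) (Fin m) ℂ :=
  Matrix.of fun p q => if (q : ℤ) - (p : ℤ) = k then 1 else 0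

private lemma aux_diag_sums (n : ℕ) (G : Matrix (Fin n) (Fin n) ℂ) (hG : G.IsHermitian)
    (htr' : ∀ k : ℕ, k ≤ n - 1 →
      ∑ p : Fin n, ∑ j : Fin n, (if (j:ℤ)-(p:ℤ) = (k:ℤ) then G j p else 0)
        = if k = 0 then 1 else 0) :
    ∀ k : ℤ, k ∈ Finset.Icc (-(n:ℤ)+1) ((n:ℤ)-1) →
      ∑ p : Fin n, ∑ l : Fin n, (if (l:ℤ)-(p:ℤ) = k then G p l else 0)
        = if k = 0 then 1 else 0 := by
  intro k hk
  simp only [Finset.mem_Icc] at hk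
  rcases le_or_gt 0 k with h0 | h0
  · lift k to ℕ using h0 with m
    have hm : m ≤ n - 1 := by omega
    have h := htr' m hm
    calc ∑ p : Fin n, ∑ l : Fin n, (if (l:ℤ)-(p:ℤ) = (m:ℤ) then G p l else 0)
        = ∑ p : Fin n, ∑ l : Fin n, (if (l:ℤ)-(p:ℤ) = (m:ℤ) then (starRingEnd ℂ) (G l p) else 0) := by
          refine Finset.sum_congr rfl fun p _ => Finset.sum_congr rfl fun l _ => ?_
          rw [← hG.apply l p]; simp
      _ = (starRingEnd ℂ) (∑ p : Fin n, ∑ l : Fin n, (if (l:ℤ)-(p:ℤ) = (m:ℤ) then G l p else 0)) := by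
          simp [map_sum, apply_ite]
      _ = if (m:ℤ) = 0 then 1 else 0 := by
          rw [h]; split <;> simp_all
  · set m : ℕ := (-k).toNat with hmdef
    have hm : m ≤ n - 1 := by omega
    have h := htr' m hm
    have h2 : ∑ p : Fin n, ∑ l : Fin n, (if (l:ℤ)-(p:ℤ) = k then G p l else 0)
        = ∑ l : Fin n, ∑ p : Fin n, (if (p:ℤ)-(l:ℤ) = (m:ℤ) then G p l else 0) := by
      rw [Finset.sum_comm]
      refine Finset.sum_congr rfl fun l _ => Finset.sum_congr rfl fun p _ => ?_
      congr 1
      simp only [eq_iff_iff]; omega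
    rw [h2, h]
    have hne : ¬ (m = 0) := by omega
    have hne2 : ¬ (k = 0) := by omega
    simp [hne, hne2]

private lemma aux_key_sum (n : ℕ) (hn : 0 < n) (G : Matrix (Fin n) (Fin n) ℂ) (z : ℂ)
    (hz : (starRingEnd ℂ) z = -z)
    (hD : ∀ k : ℤ, k ∈ Finset.Icc (-(n:ℤ)+1) ((n:ℤ)-1) →
      ∑ p : Fin n, ∑ l : Fin n, (if (l:ℤ)-(p:ℤ) = k then G p l else 0)
        = if k = 0 then 1 else 0) :
    ∑ p : Fin n, ∑ l : Fin n,
      (starRingEnd ℂ) (Complex.exp (z * (p:ℕ))) * (G p l * Complex.exp (z * (l:ℕ))) = 1 := by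
  have step1 : ∀ p l : Fin n,
      (starRingEnd ℂ) (Complex.exp (z * (p:ℕ))) * (G p l * Complex.exp (z * (l:ℕ)))
        = Complex.exp (z * (((l:ℤ) - (p:ℤ) : ℤ) : ℂ)) * G p l := by
    intro p l
    rw [← Complex.exp_conj, _root_.map_mul, hz]
    rw [show ((starRingEnd ℂ) ((p:ℕ):ℂ)) = ((p:ℕ):ℂ) by simp]
    rw [mul_comm (G p l), ← mul_assoc, ← Complex.exp_add]
    congr 1
    push_cast
    ring_nf
  calc ∑ p : Fin n, ∑ l : Fin n,
      (starRingEnd ℂ) (Complex.exp (z * (p:ℕ))) * (G p l * Complex.exp (z * (l:ℕ)))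
      = ∑ p : Fin n, ∑ l : Fin n, ∑ k ∈ Finset.Icc (-(n:ℤ)+1) ((n:ℤ)-1),
          (if ((l:ℤ) - (p:ℤ)) = k then Complex.exp (z * (k : ℂ)) * G p l else 0) := by
        refine Finset.sum_congr rfl fun p _ => Finset.sum_congr rfl fun l _ => ?_
        rw [Finset.sum_ite_eq, if_pos (by simp only [Finset.mem_Icc]; omega)]
        exact step1 p l
    _ = ∑ k ∈ Finset.Icc (-(n:ℤ)+1) ((n:ℤ)-1), ∑ p : Fin n, ∑ l : Fin n,
          (if ((l:ℤ) - (p:ℤ)) = k then Complex.exp (z * (k : ℂ)) * G p l else 0) := by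
        exact (Finset.sum_congr rfl fun p _ => Finset.sum_comm).trans Finset.sum_comm
    _ = ∑ k ∈ Finset.Icc (-(n:ℤ)+1) ((n:ℤ)-1), Complex.exp (z * (k : ℂ)) *
          ∑ p : Fin n, ∑ l : Fin n, (if ((l:ℤ) - (p:ℤ)) = k then G p l else 0) := by
        refine Finset.sum_congr rfl fun k _ => ?_
        simp [Finset.mul_sum, mul_ite]
    _ = ∑ k ∈ Finset.Icc (-(n:ℤ)+1) ((n:ℤ)-1),
          (if k = (0:ℤ) then Complex.exp (z * (k : ℂ)) else 0) := by
        refine Finset.sum_congr rfl fun k hk => ?_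
        rw [hD k hk]
        split <;> simp
    _ = 1 := by
        rw [Finset.sum_ite_eq', if_pos (by simp only [Finset.mem_Icc]; omega)]
        simp

private lemma aux_quad_expand (n : ℕ) (q : Fin n → ℂ) (G : Matrix (Fin n) (Fin n) ℂ)
    (e : Fin n → ℂ) (c : ℂ) :
    star (Sum.elim e (fun _ : Fin 1 => c)) ⬝ᵥ
      ((Matrix.fromBlocks G (Matrix.replicateCol (Fin 1) q) (Matrix.replicateRow (Fin 1) (star q)) 1) *ᵥ
        (Sum.elim e (fun _ : Fin 1 => c)))
    = star e ⬝ᵥ (G *ᵥ e) + c * (∑ l, star (e l) * q l)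
        + star c * (∑ l, star (q l) * e l) + star c * c := by
  have hstar : star (Sum.elim e (fun _ : Fin 1 => c))
      = (star e ⊕ᵥ fun _ : Fin 1 => star c) := by
    funext i; cases i <;> rfl
  have hc1 : (Sum.elim e (fun _ : Fin 1 => c)) ∘ Sum.inl = e := rfl
  have hc2 : (Sum.elim e (fun _ : Fin 1 => c)) ∘ Sum.inr = fun _ : Fin 1 => c := rfl
  rw [fromBlocks_mulVec, hc1, hc2, hstar, sumElim_dotProduct_sumElim,
    dotProduct_add, dotProduct_add]
  have h2 : star e ⬝ᵥ (Matrix.replicateCol (Fin 1) q *ᵥ fun _ : Fin 1 => c)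
      = c * (∑ l, star (e l) * q l) := by
    simp [Matrix.mulVec, dotProduct, Matrix.replicateCol, Finset.mul_sum]
    exact Finset.sum_congr rfl fun i _ => by ring
  have h3 : (fun _ : Fin 1 => star c) ⬝ᵥ (Matrix.replicateRow (Fin 1) (star q) *ᵥ e)
      = star c * (∑ l, star (q l) * e l) := by
    simp [Matrix.mulVec, dotProduct, Matrix.replicateRow]
  have h4 : (fun _ : Fin 1 => star c) ⬝ᵥ ((1 : Matrix (Fin 1) (Fin 1) ℂ) *ᵥ fun _ : Fin 1 => c)
      = star c * c := by
    simp [Matrix.mulVec_one, dotProduct]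
  rw [h2, h3, h4]
  ring

theorem stmt_9 (n : ℕ) (q : Fin n → ℂ) (G : Matrix (Fin n) (Fin n) ℂ)
    (hG : G.IsHermitian)
    (hblock : (Matrix.fromBlocks G (Matrix.replicateCol (Fin 1) q)
      (Matrix.replicateRow (Fin 1) (star q)) 1).PosSemidef)
    (htr : ∀ k : ℕ, k ≤ n - 1 →
      Matrix.trace (elemToeplitz n (k : ℤ) * G) = if k = 0 then 1 else 0) :
    ∀ f ∈ Set.Icc (0 : ℝ) 1,
      ‖∑ l : Fin n, q l * Complex.exp (-Complex.I * (2 * π * f * (l : ℕ)))‖ ≤ 1 := by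
  intro f _
  rcases Nat.eq_zero_or_pos n with rfl | hn
  · simp
  set Q : ℂ := ∑ l : Fin n, q l * Complex.exp (-Complex.I * (2 * π * f * (l : ℕ))) with hQdef
  by_cases hQ0 : Q = 0
  · rw [hQ0]; simp
  set z : ℂ := Complex.I * (2 * (π : ℂ) * (f : ℂ)) with hzdef
  have hz : (starRingEnd ℂ) z = -z := by
    rw [hzdef]
    simp only [_root_.map_mul, Complex.conj_I, Complex.conj_ofReal, map_ofNat]
    ring
  set e : Fin n → ℂ := fun l => Complex.exp (z * (l : ℕ)) with hedef
  -- trace hypothesis in sum form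
  have htr' : ∀ k : ℕ, k ≤ n - 1 →
      ∑ p : Fin n, ∑ j : Fin n, (if (j:ℤ)-(p:ℤ) = (k:ℤ) then G j p else 0)
        = if k = 0 then 1 else 0 := by
    intro k hk
    have := htr k hk
    simpa [Matrix.trace, Matrix.mul_apply, elemToeplitz, Matrix.diag, ite_mul] using this
  have hD := aux_diag_sums n G hG htr'
  have key : star e ⬝ᵥ (G *ᵥ e) = 1 := by
    have := aux_key_sum n hn G z hz hD
    rw [← this]
    simp only [dotProduct, Matrix.mulVec, Pi.star_apply, hedef, Complex.star_def,
      Finset.mul_sum]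
  -- the two linear pieces
  have hstar_e : ∀ l : Fin n,
      star (e l) = Complex.exp (-Complex.I * (2 * (π:ℂ) * (f:ℂ) * ((l:ℕ):ℂ))) := by
    intro l
    rw [hedef]
    rw [Complex.star_def, ← Complex.exp_conj]
    congr 1
    rw [_root_.map_mul, hz, map_natCast, hzdef]
    ring
  have hQ1 : (∑ l, star (e l) * q l) = Q := by
    rw [hQdef]
    refine Finset.sum_congr rfl fun l _ => ?_
    rw [mul_comm, hstar_e l]
  have hQ2 : (∑ l, star (q l) * e l) = star Q := by
    rw [hQdef, star_sum]
    refine Finset.sum_congr rfl fun l _ => ?_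
    rw [star_mul']
    congr 1
    rw [← hstar_e l, star_star]
  -- choose c
  set a : ℝ := ‖Q‖ with hadef
  have ha0 : a ≠ 0 := by simpa [hadef] using hQ0
  set c : ℂ := -(star Q) / (a : ℂ) with hcdef
  have hQQ : star Q * Q = ((a^2 : ℝ) : ℂ) := by
    rw [Complex.star_def, mul_comm, Complex.mul_conj, hadef, ← Complex.normSq_eq_norm_sq]
  have hcQ : c * Q = -((a : ℝ) : ℂ) := by
    rw [hcdef, div_mul_eq_mul_div, neg_mul, hQQ]
    push_cast
    field_simp
  have hcc : star c * c = 1 := by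
    rw [hcdef]
    have : star (-(star Q) / ((a:ℝ) : ℂ)) = -Q / ((a:ℝ):ℂ) := by
      simp [star_div₀, Complex.star_def, Complex.conj_ofReal]
    rw [this, div_mul_div_comm, neg_mul_neg, mul_comm Q, hQQ]
    push_cast
    field_simp
  -- apply PSD
  have h0 := hblock.dotProduct_mulVec_nonneg (Sum.elim e (fun _ : Fin 1 => c))
  rw [aux_quad_expand n q G e c, key, hQ1, hQ2, hcc] at h0
  have hstarcQ : star c * star Q = -((a:ℝ):ℂ) := by
    rw [← star_mul', hcQ]
    simp [Complex.star_def, Complex.conj_ofReal]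
  rw [hcQ, hstarcQ] at h0
  have h1 : (1 : ℂ) + -((a:ℝ):ℂ) + -((a:ℝ):ℂ) + 1 = (((2 - 2*a : ℝ)) : ℂ) := by
    push_cast; ring
  rw [h1] at h0
  have h2 : (0:ℝ) ≤ 2 - 2*a := Complex.zero_le_real.mp h0
  show a ≤ 1
  linarith
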